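/- For 0 < ε₀ < π/2 and r ∈ [0, π/2], arctan( (sin ε₀ · cos r) / sqrt( cos²ε₀ · cos²r + sin²r ) ) ≤ ε₀ · cos r. -/
import Mathlib

open Real

lemma mul_sin_le_sin_mul {a t : ℝ} (ha : 0 ≤ a) (ha' : a ≤ π) (ht : 0 ≤ t) (ht' : t ≤ 1) :
    t * Real.sin a ≤ Real.sin (t * a) := by
  have hc : ConcaveOn ℝ (Set.Icc 0 π) Real.sin := strictConcaveOn_sin_Icc.concaveOn
  have h0 : (0:ℝ) ∈ Set.Icc 0 π := by constructor <;> [rfl; positivity]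
  have hA : a ∈ Set.Icc 0 π := ⟨ha, ha'⟩
  have := hc.2 h0 hA (by linarith : (0:ℝ) ≤ 1 - t) ht (by ring)
  simpa using this

theorem arctan_le_eps_cos (ε₀ : ℝ) (hε₀ : 0 < ε₀) (hε₀' : ε₀ < π / 2)
    (r : ℝ) (hr : r ∈ Set.Icc 0 (π / 2)) :
    Real.arctan ((Real.sin ε₀ * Real.cos r) /
        Real.sqrt ((Real.cos ε₀) ^ 2 * (Real.cos r) ^ 2 + (Real.sin r) ^ 2)) ≤
      ε₀ * Real.cos r := by
  obtain ⟨hr0, hr1⟩ := hr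
  have hcr0 : 0 ≤ Real.cos r := Real.cos_nonneg_of_mem_Icc ⟨by linarith, hr1⟩
  have hcr1 : Real.cos r ≤ 1 := Real.cos_le_one r
  have hs0 : 0 ≤ Real.sin ε₀ := Real.sin_nonneg_of_nonneg_of_le_pi hε₀.le (by linarith [Real.pi_pos])
  have hs1 : Real.sin ε₀ < 1 := by
    have := Real.sin_lt_sin_of_lt_of_le_pi_div_two (x := ε₀) (y := π/2) (by linarith [Real.pi_pos]) le_rfl hε₀'
    simpa using this
  set u : ℝ := Real.sin ε₀ * Real.cos r with hu
  have hu0 : 0 ≤ u := mul_nonneg hs0 hcr0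
  have hu1 : u < 1 := lt_of_le_of_lt (by nlinarith) hs1
  have hD : (Real.cos ε₀) ^ 2 * (Real.cos r) ^ 2 + (Real.sin r) ^ 2 = 1 - u ^ 2 := by
    have h1 := Real.sin_sq_add_cos_sq ε₀
    have h2 := Real.sin_sq_add_cos_sq r
    simp only [hu]; nlinarith
  rw [hD, ← Real.arcsin_eq_arctan ⟨by linarith, hu1⟩]
  have key : u ≤ Real.sin (ε₀ * Real.cos r) := by
    have := mul_sin_le_sin_mul (a := ε₀) hε₀.le (by linarith [Real.pi_pos]) hcr0 hcr1
    calc u = Real.cos r * Real.sin ε₀ := by ring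
    _ ≤ Real.sin (Real.cos r * ε₀) := this
    _ = Real.sin (ε₀ * Real.cos r) := by ring_nf
  calc Real.arcsin u ≤ Real.arcsin (Real.sin (ε₀ * Real.cos r)) :=
        Real.monotone_arcsin key
    _ = ε₀ * Real.cos r := Real.arcsin_sin (by nlinarith [Real.pi_pos]) (by nlinarith [Real.pi_pos])
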